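/- Let Ω ⊂ ℝ^N be a bounded domain, f a continuous nonnegative function on the closure of Ω, and λ ≥ 0. For ε ∈ (0,1) define ψ_ε(t) = 1 − (ε + (1−ε)(1−t)³)^{1/3} for t ∈ [0,1]. If u is a classical solution of (S)_λ, then the function v = ψ_ε ∘ u satisfies: 0 ≤ v(x) ≤ 1 − ε^{1/3} for all x in Ω, v = 0 on ∂Ω, and −Δv(x) ≥ (1−ε) λ f(x)/(1−v(x))² for every x ∈ Ω; that is, v is a classical supersolution of (S)_{(1−ε)λ} bounded away from 1. -/

import Mathlib

open MeasureTheory Real Filter Topology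

private lemma gderiv (ε t : ℝ) :
    HasDerivAt (fun s : ℝ => ε + (1 - ε) * (1 - s) ^ 3) (-(3 * (1 - ε) * (1 - t) ^ 2)) t := by
  have h0 : HasDerivAt (fun s : ℝ => 1 - s) (-1) t := (hasDerivAt_id t).const_sub 1
  have h1 := ((h0.pow 3).const_mul (1 - ε)).const_add ε
  refine h1.congr_deriv ?_
  ring

private lemma psi_deriv (ε t : ℝ) (hg : 0 < ε + (1 - ε) * (1 - t) ^ 3) :
    HasDerivAt (fun s : ℝ => 1 - (ε + (1 - ε) * (1 - s) ^ 3) ^ ((1 : ℝ) / 3))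
      ((1 - ε) * (1 - t) ^ 2 * (ε + (1 - ε) * (1 - t) ^ 3) ^ (-(2 : ℝ) / 3)) t := by
  have hr := (Real.hasDerivAt_rpow_const
      (x := ε + (1 - ε) * (1 - t) ^ 3) (p := (1 : ℝ) / 3) (Or.inl hg.ne')).comp t (gderiv ε t)
  have h2 := hr.const_sub 1
  refine h2.congr_deriv ?_
  rw [show (1 : ℝ) / 3 - 1 = -(2 : ℝ) / 3 by norm_num]
  ring

private lemma psi1_deriv (ε t : ℝ) (hg : 0 < ε + (1 - ε) * (1 - t) ^ 3) :
    HasDerivAt (fun s : ℝ => (1 - ε) * (1 - s) ^ 2 * (ε + (1 - ε) * (1 - s) ^ 3) ^ (-(2 : ℝ) / 3))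
      (-2 * ε * (1 - ε) * (1 - t) * (ε + (1 - ε) * (1 - t) ^ 3) ^ (-(5 : ℝ) / 3)) t := by
  have h0 : HasDerivAt (fun s : ℝ => 1 - s) (-1) t := (hasDerivAt_id t).const_sub 1
  have hA : HasDerivAt (fun s : ℝ => (1 - ε) * (1 - s) ^ 2) ((1 - ε) * (2 * (1 - t) ^ 1 * -1)) t :=
    (h0.pow 2).const_mul (1 - ε)
  have hB := (Real.hasDerivAt_rpow_const
      (x := ε + (1 - ε) * (1 - t) ^ 3) (p := -(2 : ℝ) / 3) (Or.inl hg.ne')).comp t (gderiv ε t)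
  have hAB := hA.mul hB
  have key : (ε + (1 - ε) * (1 - t) ^ 3) ^ (-(2 : ℝ) / 3)
      = (ε + (1 - ε) * (1 - t) ^ 3) * (ε + (1 - ε) * (1 - t) ^ 3) ^ (-(5 : ℝ) / 3) := by
    rw [show -(2 : ℝ) / 3 = 1 + -(5 : ℝ) / 3 by norm_num, Real.rpow_add hg, Real.rpow_one]
  refine hAB.congr_deriv ?_
  simp only [Function.comp_apply]
  rw [show (-(2 : ℝ) / 3 - 1) = -(5 : ℝ) / 3 by norm_num, key]
  ring
noncomputable def lap {N : ℕ} (u : EuclideanSpace ℝ (Fin N) → ℝ) (x : EuclideanSpace ℝ (Fin N)) : ℝ :=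
  ∑ i : Fin N, fderiv ℝ (fun y => fderiv ℝ u y (EuclideanSpace.single i 1)) x (EuclideanSpace.single i 1)

/-- `u` is a classical solution of problem `(S)_lam` on `Ω` with permittivity profile `f`. -/
def IsSol {N : ℕ} (Ω : Set (EuclideanSpace ℝ (Fin N))) (f : EuclideanSpace ℝ (Fin N) → ℝ)
    (lam : ℝ) (u : EuclideanSpace ℝ (Fin N) → ℝ) : Prop :=
  ContDiffOn ℝ 2 u Ω ∧ ContinuousOn u (closure Ω) ∧
  (∀ x ∈ Ω, 0 ≤ u x ∧ u x < 1) ∧ (∀ x ∈ frontier Ω, u x = 0) ∧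
  ∀ x ∈ Ω, -lap u x = lam * f x / (1 - u x) ^ 2

/-- The concave truncation `ψ_ε` turning a solution into a supersolution of
`(S)_{(1-ε)λ}` bounded away from `1`. -/
theorem stmt11 (N : ℕ)
    (Ω : Set (EuclideanSpace ℝ (Fin N))) (hΩo : IsOpen Ω) (hΩb : Bornology.IsBounded Ω)
    (f : EuclideanSpace ℝ (Fin N) → ℝ) (hf : ContinuousOn f (closure Ω))
    (hf0 : ∀ x ∈ closure Ω, 0 ≤ f x)
    (lam : ℝ) (hlam : 0 ≤ lam) (ε : ℝ) (hε : 0 < ε) (hε1 : ε < 1)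
    (u : EuclideanSpace ℝ (Fin N) → ℝ) (hu : IsSol Ω f lam u)
    (ψ : ℝ → ℝ) (hψ : ∀ t, ψ t = 1 - (ε + (1 - ε) * (1 - t) ^ 3) ^ ((1 : ℝ) / 3))
    (v : EuclideanSpace ℝ (Fin N) → ℝ) (hv : ∀ x, v x = ψ (u x)) :
    (∀ x ∈ Ω, 0 ≤ v x ∧ v x ≤ 1 - ε ^ ((1 : ℝ) / 3)) ∧
    (∀ x ∈ frontier Ω, v x = 0) ∧
    (∀ x ∈ Ω, (1 - ε) * lam * f x / (1 - v x) ^ 2 ≤ -lap v x) := by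
  obtain ⟨hu2, hucont, hu01, hub, hueq⟩ := hu
  have hε' : (0 : ℝ) < 1 - ε := by linarith
  have hgpos : ∀ y ∈ Ω, 0 < ε + (1 - ε) * (1 - u y) ^ 3 := by
    intro y hy
    obtain ⟨h0, h1⟩ := hu01 y hy
    nlinarith [pow_nonneg (by linarith : (0:ℝ) ≤ 1 - u y) 3]
  refine ⟨?_, ?_, ?_⟩
  · intro x hx
    obtain ⟨h0, h1⟩ := hu01 x hx
    have hg := hgpos x hx
    constructor
    · have hgle : ε + (1 - ε) * (1 - u x) ^ 3 ≤ 1 := by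
        have h3 : (1 - u x) ^ 3 ≤ 1 := pow_le_one₀ (by linarith) (by linarith)
        nlinarith
      have := Real.rpow_le_one hg.le hgle (by norm_num : (0:ℝ) ≤ 1/3)
      rw [hv, hψ]; linarith
    · have hεle : ε ≤ ε + (1 - ε) * (1 - u x) ^ 3 := by
        nlinarith [pow_nonneg (by linarith : (0:ℝ) ≤ 1 - u x) 3]
      have := Real.rpow_le_rpow hε.le hεle (by norm_num : (0:ℝ) ≤ 1/3)
      rw [hv, hψ]; linarith
  · intro x hx
    have h1 : ε + (1 - ε) * ((1:ℝ) - 0) ^ 3 = 1 := by ring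
    rw [hv, hψ, hub x hx, h1, Real.one_rpow]; ring
  · intro x hx
    obtain ⟨h0, h1⟩ := hu01 x hx
    have hg := hgpos x hx
    have hveq : v = fun y => 1 - (ε + (1 - ε) * (1 - u y) ^ 3) ^ ((1:ℝ)/3) := by
      funext y; rw [hv, hψ]
    have hcd : ∀ y ∈ Ω, ContDiffAt ℝ 2 u y := fun y hy => hu2.contDiffAt (hΩo.mem_nhds hy)
    have hud : ∀ y ∈ Ω, HasFDerivAt u (fderiv ℝ u y) y := fun y hy =>
      ((hcd y hy).differentiableAt (by norm_num)).hasFDerivAt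
    have hvF : ∀ y ∈ Ω, HasFDerivAt v
        (((1 - ε) * (1 - u y) ^ 2 * (ε + (1 - ε) * (1 - u y) ^ 3) ^ (-(2:ℝ)/3)) •
          fderiv ℝ u y) y := by
      intro y hy
      rw [hveq]
      exact (psi_deriv ε (u y) (hgpos y hy)).comp_hasFDerivAt y (hud y hy)
    have hA : HasFDerivAt
        (fun y => (1 - ε) * (1 - u y) ^ 2 * (ε + (1 - ε) * (1 - u y) ^ 3) ^ (-(2:ℝ)/3))
        ((-2 * ε * (1 - ε) * (1 - u x) * (ε + (1 - ε) * (1 - u x) ^ 3) ^ (-(5:ℝ)/3)) •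
          fderiv ℝ u x) x :=
      (psi1_deriv ε (u x) hg).comp_hasFDerivAt x (hud x hx)
    have hcd2 : ContDiffAt ℝ 1 (fderiv ℝ u) x :=
      (hcd x hx).fderiv_right (by norm_num)
    have hB : ∀ i : Fin N, HasFDerivAt (fun y => fderiv ℝ u y (EuclideanSpace.single i 1))
        (fderiv ℝ (fun y => fderiv ℝ u y (EuclideanSpace.single i 1)) x) x := fun i =>
      ((hcd2.clm_apply contDiffAt_const).differentiableAt one_ne_zero).hasFDerivAt
    have key : ∀ i : Fin N,
        fderiv ℝ (fun y => fderiv ℝ v y (EuclideanSpace.single i 1)) x (EuclideanSpace.single i 1)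
        = ((1 - ε) * (1 - u x) ^ 2 * (ε + (1 - ε) * (1 - u x) ^ 3) ^ (-(2:ℝ)/3)) *
            fderiv ℝ (fun y => fderiv ℝ u y (EuclideanSpace.single i 1)) x (EuclideanSpace.single i 1)
          + (-2 * ε * (1 - ε) * (1 - u x) * (ε + (1 - ε) * (1 - u x) ^ 3) ^ (-(5:ℝ)/3)) *
            (fderiv ℝ u x (EuclideanSpace.single i 1)) ^ 2 := by
      intro i
      have heq : (fun y => fderiv ℝ v y (EuclideanSpace.single i 1))
          =ᶠ[nhds x] (fun y =>
            ((1 - ε) * (1 - u y) ^ 2 * (ε + (1 - ε) * (1 - u y) ^ 3) ^ (-(2:ℝ)/3)) *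
              fderiv ℝ u y (EuclideanSpace.single i 1)) := by
        filter_upwards [hΩo.mem_nhds hx] with y hy
        rw [(hvF y hy).fderiv]
        simp
      rw [heq.fderiv_eq, (hA.fun_mul (hB i)).fderiv]
      simp only [ContinuousLinearMap.add_apply, ContinuousLinearMap.smul_apply, smul_eq_mul]
      ring
    have hlap : lap v x
        = ((1 - ε) * (1 - u x) ^ 2 * (ε + (1 - ε) * (1 - u x) ^ 3) ^ (-(2:ℝ)/3)) * lap u x
          + (-2 * ε * (1 - ε) * (1 - u x) * (ε + (1 - ε) * (1 - u x) ^ 3) ^ (-(5:ℝ)/3)) *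
            ∑ i : Fin N, (fderiv ℝ u x (EuclideanSpace.single i 1)) ^ 2 := by
      unfold lap
      rw [Finset.sum_congr rfl (fun i _ => key i), Finset.sum_add_distrib,
        ← Finset.mul_sum, ← Finset.mul_sum]
    have hS : 0 ≤ ∑ i : Fin N, (fderiv ℝ u x (EuclideanSpace.single i 1)) ^ 2 :=
      Finset.sum_nonneg fun i _ => sq_nonneg _
    have hrp5 : 0 < (ε + (1 - ε) * (1 - u x) ^ 3) ^ (-(5:ℝ)/3) := Real.rpow_pos_of_pos hg _
    have hP2 : -2 * ε * (1 - ε) * (1 - u x) * (ε + (1 - ε) * (1 - u x) ^ 3) ^ (-(5:ℝ)/3) ≤ 0 := by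
      have h1' : 0 ≤ 2 * ε * (1 - ε) * (1 - u x) * (ε + (1 - ε) * (1 - u x) ^ 3) ^ (-(5:ℝ)/3) := by
        apply mul_nonneg _ hrp5.le
        apply mul_nonneg _ (by linarith : (0:ℝ) ≤ 1 - u x)
        apply mul_nonneg _ hε'.le
        linarith
      linarith
    have h2 : (1 - v x) ^ 2 = (ε + (1 - ε) * (1 - u x) ^ 3) ^ ((2:ℝ)/3) := by
      rw [hv, hψ]
      have : (1 : ℝ) - (1 - (ε + (1 - ε) * (1 - u x) ^ 3) ^ ((1:ℝ)/3))
          = (ε + (1 - ε) * (1 - u x) ^ 3) ^ ((1:ℝ)/3) := by ring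
      rw [this, ← Real.rpow_natCast ((ε + (1 - ε) * (1 - u x) ^ 3) ^ ((1:ℝ)/3)) 2,
        ← Real.rpow_mul hg.le]
      norm_num
    have hmain : ((1 - ε) * (1 - u x) ^ 2 * (ε + (1 - ε) * (1 - u x) ^ 3) ^ (-(2:ℝ)/3)) *
        (lam * f x / (1 - u x) ^ 2) = (1 - ε) * lam * f x / (1 - v x) ^ 2 := by
      rw [h2]
      have hne : (1 : ℝ) - u x ≠ 0 := by linarith
      have hgne : (ε + (1 - ε) * (1 - u x) ^ 3) ^ ((2:ℝ)/3) ≠ 0 :=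
        (Real.rpow_pos_of_pos hg _).ne'
      have hinv : (ε + (1 - ε) * (1 - u x) ^ 3) ^ (-(2:ℝ)/3)
          = ((ε + (1 - ε) * (1 - u x) ^ 3) ^ ((2:ℝ)/3))⁻¹ := by
        rw [show -(2:ℝ)/3 = -((2:ℝ)/3) by ring, Real.rpow_neg hg.le]
      rw [hinv]
      field_simp
    calc (1 - ε) * lam * f x / (1 - v x) ^ 2
        = ((1 - ε) * (1 - u x) ^ 2 * (ε + (1 - ε) * (1 - u x) ^ 3) ^ (-(2:ℝ)/3)) *
            (lam * f x / (1 - u x) ^ 2) := hmain.symm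
      _ ≤ ((1 - ε) * (1 - u x) ^ 2 * (ε + (1 - ε) * (1 - u x) ^ 3) ^ (-(2:ℝ)/3)) *
            (lam * f x / (1 - u x) ^ 2)
          + (-(-2 * ε * (1 - ε) * (1 - u x) * (ε + (1 - ε) * (1 - u x) ^ 3) ^ (-(5:ℝ)/3))) *
            ∑ i : Fin N, (fderiv ℝ u x (EuclideanSpace.single i 1)) ^ 2 :=
          le_add_of_nonneg_right (mul_nonneg (neg_nonneg.2 hP2) hS)
      _ = -lap v x := by rw [hlap, ← hueq x hx]; ring
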